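/- arXiv:1510.04225 — 3 statements merged into one kernel-verified Lean document; each statement's English description precedes it below -/
import Mathlib

section
/- The sum (p_{k+1}^2 - 9) · ∏_{i=2}^{k} (1 - 2/p_i) tends to infinity as k → ∞, where p_i is the i-th prime. -/
open Filter Finset

local notation "q" => Nat.nth Nat.Prime

private lemma q_two_le (n : ℕ) : 2 ≤ q n := (Nat.prime_nth_prime n).two_le

private lemma three_mul_le_q (n : ℕ) : 3 * n ≤ q n + 11 := by
  rcases le_or_gt 7 (q n) with h7 | h7
  · have hc := Nat.primeCounting'_add_le (a := 6) (k := 7) (by norm_num) (by norm_num) (q n - 7)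
    rw [Nat.add_sub_cancel' h7, Nat.primeCounting'_nth_eq] at hc
    have h6 : Nat.primeCounting' 7 = 3 := by decide
    have ht : Nat.totient 6 = 2 := by decide
    rw [h6, ht] at hc
    omega
  · have h1 := Nat.add_two_le_nth_prime n
    have h2 := q_two_le n
    omega

private lemma q_real (n : ℕ) : 3 * (n : ℝ) - 11 ≤ (q n : ℝ) := by
  have h := three_mul_le_q n
  have : (3 * n : ℝ) ≤ (q n : ℝ) + 11 := by exact_mod_cast h
  linarith

private lemma exp_le_one_sub {x : ℝ} (h0 : 0 ≤ x) (h1 : x ≤ 1/2) :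
    Real.exp (-(2*x)) ≤ 1 - x := by
  have h2 : 1 + 2*x ≤ Real.exp (2*x) := by
    have := Real.add_one_le_exp (2*x); linarith
  have h3 : (0:ℝ) < 1 + 2*x := by linarith
  have h4 : (Real.exp (2*x))⁻¹ ≤ (1 + 2*x)⁻¹ := by
    apply inv_anti₀ h3 h2
  have h5 : (1 + 2*x)⁻¹ ≤ 1 - x := by
    rw [inv_eq_one_div, div_le_iff₀ h3]; nlinarith
  rw [Real.exp_neg]
  exact h4.trans h5

private lemma sum_shift (k d : ℕ) (hd1 : 1 ≤ d) (hd2 : d ≤ 2) :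
    ∑ i ∈ Icc 2 k, (1 / (q (i - d) : ℝ)) ≤ ∑ j ∈ range k, 1 / (q j : ℝ) := by
  have hinj : ∀ x ∈ Icc 2 k, ∀ y ∈ Icc 2 k, x - d = y - d → x = y := by
    intro x hx y hy h
    simp only [mem_Icc] at hx hy
    omega
  rw [show (∑ i ∈ Icc 2 k, (1 / (q (i - d) : ℝ)))
      = ∑ j ∈ (Icc 2 k).image (fun i => i - d), (1 / (q j : ℝ)) from (Finset.sum_image (f := fun j : ℕ => 1 / (q j : ℝ)) hinj).symm]
  apply Finset.sum_le_sum_of_subset_of_nonneg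
  · intro j hj
    simp only [Finset.mem_image, mem_Icc] at hj
    obtain ⟨i, ⟨h2, hik⟩, rfl⟩ := hj
    simp only [mem_range]
    omega
  · intro j _ _
    positivity

private lemma sum_q_le (k : ℕ) :
    ∑ j ∈ range k, (1 / (q j : ℝ)) ≤ 17/6 + (1/3) * Real.log k := by
  have hterm : ∀ j : ℕ, (1 / (q j : ℝ)) ≤ 1/2 := by
    intro j
    have h : (2:ℝ) ≤ (q j : ℝ) := by exact_mod_cast q_two_le j
    exact one_div_le_one_div_of_le (by norm_num) h
  have hlog : 0 ≤ Real.log k := by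
    rcases Nat.eq_zero_or_pos k with h | h
    · simp [h]
    · exact Real.log_nonneg (by exact_mod_cast h)
  rcases lt_or_ge k 5 with hk | hk
  · have : ∑ j ∈ range k, (1 / (q j : ℝ)) ≤ ∑ j ∈ range k, (1/2 : ℝ) :=
      Finset.sum_le_sum fun j _ => hterm j
    rw [Finset.sum_const, Finset.card_range] at this
    have hk4 : (k : ℝ) ≤ 4 := by exact_mod_cast Nat.lt_succ_iff.mp hk
    have : ∑ j ∈ range k, (1 / (q j : ℝ)) ≤ (k:ℝ) * (1/2) := by
      simpa [nsmul_eq_mul] using this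
    linarith
  · have hsplit : ∑ j ∈ range k, (1 / (q j : ℝ))
        = ∑ j ∈ range 5, (1 / (q j : ℝ)) + ∑ j ∈ Ico 5 k, (1 / (q j : ℝ)) := by
      simp only [range_eq_Ico]
      exact (Finset.sum_Ico_consecutive _ (Nat.zero_le 5) hk).symm
    have h1 : ∑ j ∈ range 5, (1 / (q j : ℝ)) ≤ 5/2 := by
      have : ∑ j ∈ range 5, (1 / (q j : ℝ)) ≤ ∑ j ∈ range 5, (1/2 : ℝ) :=
        Finset.sum_le_sum fun j _ => hterm j
      norm_num at this ⊢; linarith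
    have step1 : ∑ j ∈ Ico 5 k, (1 / (q j : ℝ)) ≤ ∑ j ∈ Ico 5 k, (1 / (3*((j:ℝ) - 4))) := by
      apply Finset.sum_le_sum
      intro j hj
      simp only [mem_Ico] at hj
      have h5j : (5:ℝ) ≤ (j:ℝ) := by exact_mod_cast hj.1
      have hq := q_real j
      exact one_div_le_one_div_of_le (by linarith) (by linarith)
    have step2 : ∑ j ∈ Ico 5 k, (1 / (3*((j:ℝ) - 4)))
        = (1/3) * ∑ i ∈ range (k - 5), (1 / ((i:ℝ) + 1)) := by
      rw [Finset.sum_Ico_eq_sum_range, Finset.mul_sum]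
      apply Finset.sum_congr rfl
      intro i _
      push_cast
      rw [show (5:ℝ) + (i:ℝ) - 4 = (i:ℝ) + 1 from by ring, one_div_mul_one_div]
    have step3 : ∑ i ∈ range (k - 5), (1 / ((i:ℝ) + 1)) ≤ 1 + Real.log k := by
      have hsub : ∑ i ∈ range (k - 5), (1 / ((i:ℝ) + 1))
          ≤ ∑ i ∈ range k, (1 / ((i:ℝ) + 1)) := by
        apply Finset.sum_le_sum_of_subset_of_nonneg
        · exact Finset.range_subset_range.2 (by omega)
        · intro i _ _; positivity
      have hcast : ((harmonic k : ℚ) : ℝ) = ∑ i ∈ range k, (1 / ((i:ℝ) + 1)) := by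
        rw [harmonic]
        push_cast
        simp [one_div]
      have hharm := harmonic_le_one_add_log k
      rw [hcast] at hharm
      linarith
    rw [hsplit]
    calc ∑ j ∈ range 5, (1 / (q j : ℝ)) + ∑ j ∈ Ico 5 k, (1 / (q j : ℝ))
        ≤ 5/2 + (1/3) * (1 + Real.log k) := by
          have := step1.trans (le_of_eq step2)
          have h3 : (1/3 : ℝ) * ∑ i ∈ range (k - 5), (1 / ((i:ℝ) + 1))
              ≤ (1/3) * (1 + Real.log k) := by linarith [step3]
          linarith
      _ ≤ 17/6 + (1/3) * Real.log k := by linarith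

private lemma pair_ineq {p r : ℝ} (hr : 2 ≤ r) (hp : r + 1 ≤ p) :
    (1 - 1/p) * (1 - 1/r) ≤ 1 - 2/p := by
  have hr0 : (0:ℝ) < r := by linarith
  have hp0 : (0:ℝ) < p := by linarith
  have key : (1 - 2/p) - (1 - 1/p) * (1 - 1/r) = (p - r - 1) / (p * r) := by
    field_simp
    ring
  have h2 : 0 ≤ (p - r - 1) / (p * r) :=
    div_nonneg (by linarith) (by positivity)
  linarith [key, h2]

private lemma prod_lb (k : ℕ) :
    Real.exp (-(4 * ∑ j ∈ range k, (1 / (q j : ℝ))))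
      ≤ ∏ i ∈ Icc 2 k, (1 - 2 / (q (i - 1) : ℝ)) := by
  have key : ∀ i ∈ Icc 2 k,
      Real.exp (-(2 * (1 / (q (i-1) : ℝ)) + 2 * (1 / (q (i-2) : ℝ))))
        ≤ 1 - 2 / (q (i-1) : ℝ) := by
    intro i hi
    simp only [mem_Icc] at hi
    have hrp : q (i-2) + 1 ≤ q (i-1) :=
      (Nat.nth_lt_nth Nat.infinite_setOf_prime).2 (show i - 2 < i - 1 by omega)
    have hr2 : 2 ≤ q (i-2) := q_two_le _
    have hrR : (2:ℝ) ≤ (q (i-2) : ℝ) := by exact_mod_cast hr2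
    have hrpR : (q (i-2) : ℝ) + 1 ≤ (q (i-1) : ℝ) := by exact_mod_cast hrp
    have hpR : (2:ℝ) ≤ (q (i-1) : ℝ) := by linarith
    have hx1 : (1 / (q (i-1) : ℝ)) ≤ 1/2 := by
      exact one_div_le_one_div_of_le (by norm_num) hpR
    have hx2 : (1 / (q (i-2) : ℝ)) ≤ 1/2 := by
      exact one_div_le_one_div_of_le (by norm_num) hrR
    have e1 : Real.exp (-(2 * (1 / (q (i-1) : ℝ)))) ≤ 1 - 1 / (q (i-1) : ℝ) :=
      exp_le_one_sub (by positivity) hx1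
    have e2 : Real.exp (-(2 * (1 / (q (i-2) : ℝ)))) ≤ 1 - 1 / (q (i-2) : ℝ) :=
      exp_le_one_sub (by positivity) hx2
    have emul : Real.exp (-(2 * (1 / (q (i-1) : ℝ)) + 2 * (1 / (q (i-2) : ℝ))))
        = Real.exp (-(2 * (1 / (q (i-1) : ℝ)))) * Real.exp (-(2 * (1 / (q (i-2) : ℝ)))) := by
      rw [← Real.exp_add]; ring_nf
    rw [emul]
    calc Real.exp (-(2 * (1 / (q (i-1) : ℝ)))) * Real.exp (-(2 * (1 / (q (i-2) : ℝ))))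
        ≤ (1 - 1 / (q (i-1) : ℝ)) * (1 - 1 / (q (i-2) : ℝ)) := by
          apply mul_le_mul e1 e2 (Real.exp_pos _).le (by linarith)
      _ ≤ 1 - 2 / (q (i-1) : ℝ) := pair_ineq hrR hrpR
  calc Real.exp (-(4 * ∑ j ∈ range k, (1 / (q j : ℝ))))
      ≤ Real.exp (-(∑ i ∈ Icc 2 k,
          (2 * (1 / (q (i-1) : ℝ)) + 2 * (1 / (q (i-2) : ℝ))))) := by
        apply Real.exp_le_exp.2
        have hs1 := sum_shift k 1 (by norm_num) (by norm_num)
        have hs2 := sum_shift k 2 (by norm_num) (by norm_num)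
        have : ∑ i ∈ Icc 2 k, (2 * (1 / (q (i-1) : ℝ)) + 2 * (1 / (q (i-2) : ℝ)))
            = 2 * (∑ i ∈ Icc 2 k, (1 / (q (i-1) : ℝ)))
              + 2 * (∑ i ∈ Icc 2 k, (1 / (q (i-2) : ℝ))) := by
          rw [Finset.sum_add_distrib, Finset.mul_sum, Finset.mul_sum]
        rw [this]
        have hS0 : (0:ℝ) ≤ ∑ j ∈ range k, (1 / (q j : ℝ)) :=
          Finset.sum_nonneg fun j _ => by positivity
        linarith
    _ = ∏ i ∈ Icc 2 k, Real.exp (-(2 * (1 / (q (i-1) : ℝ)) + 2 * (1 / (q (i-2) : ℝ)))) := by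
        rw [← Real.exp_sum]
        congr 1
        rw [← Finset.sum_neg_distrib]
    _ ≤ ∏ i ∈ Icc 2 k, (1 - 2 / (q (i-1) : ℝ)) :=
        Finset.prod_le_prod (fun i _ => (Real.exp_pos _).le) key

/-- `(p_{k+1}^2 - 9) · ∏_{i=2}^{k} (1 - 2/p_i) → ∞` as `k → ∞`, where `p_i` is the
`i`-th prime (so `p_{k+1} = Nat.nth Nat.Prime k`). -/
theorem stmt_13 :
    Tendsto (fun k : ℕ =>
        ((Nat.nth Nat.Prime k : ℝ) ^ 2 - 9) *
          ∏ i ∈ Finset.Icc 2 k, (1 - 2 / (Nat.nth Nat.Prime (i - 1) : ℝ)))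
      atTop atTop := by
  have main : ∀ k : ℕ, 11 ≤ k →
      Real.exp (-(34/3)) * (k:ℝ) ^ ((2:ℝ)/3)
        ≤ ((Nat.nth Nat.Prime k : ℝ) ^ 2 - 9) *
            ∏ i ∈ Finset.Icc 2 k, (1 - 2 / (Nat.nth Nat.Prime (i - 1) : ℝ)) := by
    intro k hk
    have hkR : (11:ℝ) ≤ (k:ℝ) := by exact_mod_cast hk
    have hk0 : (0:ℝ) < (k:ℝ) := by linarith
    have hS := sum_q_le k
    have hQ := prod_lb k
    have hq := q_real k
    have hA : (k:ℝ)^2 ≤ (q k : ℝ)^2 - 9 := by nlinarith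
    have hA0 : (0:ℝ) ≤ (q k : ℝ)^2 - 9 := le_trans (by positivity) hA
    have hQ2 : Real.exp (-(34/3)) * (k:ℝ) ^ (-(4/3) : ℝ)
        ≤ ∏ i ∈ Icc 2 k, (1 - 2 / (q (i-1) : ℝ)) := by
      refine le_trans ?_ hQ
      rw [Real.rpow_def_of_pos hk0, ← Real.exp_add]
      apply Real.exp_le_exp.2
      have hl := hS
      nlinarith [Real.log_nonneg (by linarith : (1:ℝ) ≤ (k:ℝ))]
    have hQ20 : (0:ℝ) ≤ Real.exp (-(34/3)) * (k:ℝ) ^ (-(4/3) : ℝ) := by positivity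
    have hchain : (k:ℝ)^2 * (Real.exp (-(34/3)) * (k:ℝ) ^ (-(4/3) : ℝ))
        ≤ ((q k : ℝ)^2 - 9) * ∏ i ∈ Icc 2 k, (1 - 2 / (q (i-1) : ℝ)) :=
      mul_le_mul hA hQ2 hQ20 hA0
    refine le_trans (le_of_eq ?_) hchain
    have hpow : (k:ℝ)^2 * (k:ℝ) ^ (-(4/3) : ℝ) = (k:ℝ) ^ ((2:ℝ)/3) := by
      rw [← Real.rpow_natCast (k:ℝ) 2, ← Real.rpow_add hk0]
      norm_num
    rw [← hpow]
    ring
  have h1 : Tendsto (fun k : ℕ => Real.exp (-(34/3)) * (k:ℝ) ^ ((2:ℝ)/3)) atTop atTop := by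
    apply Tendsto.const_mul_atTop (Real.exp_pos _)
    exact (tendsto_rpow_atTop (by norm_num : (0:ℝ) < 2/3)).comp tendsto_natCast_atTop_atTop
  exact tendsto_atTop_mono' atTop (eventually_atTop.2 ⟨11, main⟩) h1
end

section
/- For all k ≥ 2, ∏_{i=2}^{k} (1 - 2/p_i) ≥ 2 · ∏_{i=1}^{k} (1 - 1/p_i)^2, where p_i denotes the i-th prime. -/
private noncomputable def qp (n : ℕ) : ℝ := (Nat.nth Nat.Prime n : ℝ)

private lemma qp_ge_two (n : ℕ) : (2:ℝ) ≤ qp n := by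
  have := (Nat.prime_nth_prime n).two_le
  unfold qp; exact_mod_cast this

private lemma qp_succ (n : ℕ) : qp n + 1 ≤ qp (n+1) := by
  have : Nat.nth Nat.Prime n < Nat.nth Nat.Prime (n+1) :=
    (Nat.nth_lt_nth Nat.infinite_setOf_prime).2 (Nat.lt_succ_self n)
  have : Nat.nth Nat.Prime n + 1 ≤ Nat.nth Nat.Prime (n+1) := this
  unfold qp; exact_mod_cast this

private lemma key (n : ℕ) : (1 - 1/qp (n+1)) * (1 - 1/qp n) ≤ 1 - 2/qp (n+1) := by
  have h2 : (2:ℝ) ≤ qp n := qp_ge_two n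
  have h3 : qp n + 1 ≤ qp (n+1) := qp_succ n
  have hq : (0:ℝ) < qp n := by linarith
  have hq1 : (0:ℝ) < qp (n+1) := by linarith
  have expand : (1 - 1/qp (n+1)) * (1 - 1/qp n) ≤ (1 - 1/qp (n+1)) * (1 - 1/(qp (n+1) - 1)) := by
    have hp1 : (0:ℝ) < qp (n+1) - 1 := by linarith
    have : 1/(qp (n+1) - 1) ≤ 1/qp n := by
      apply one_div_le_one_div_of_le hq; linarith
    have hpos : (0:ℝ) ≤ 1 - 1/qp (n+1) := by
      have : 1/qp (n+1) ≤ 1/2 := one_div_le_one_div_of_le two_pos (by linarith)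
      linarith
    nlinarith
  have hid : (1 - 1/qp (n+1)) * (1 - 1/(qp (n+1) - 1)) = 1 - 2/qp (n+1) := by
    have hp1 : qp (n+1) - 1 ≠ 0 := by intro h; nlinarith [qp_ge_two (n+1)]
    have hq1' : qp (n+1) ≠ 0 := ne_of_gt hq1
    field_simp
    ring
  linarith [expand, hid.le, hid.ge]

private lemma strong (k : ℕ) (hk : 2 ≤ k) :
    2 * (∏ i ∈ Finset.Icc 1 k, (1 - 1 / qp (i - 1)) ^ 2) / (1 - 1/qp (k-1)) ≤
      ∏ i ∈ Finset.Icc 2 k, (1 - 2 / qp (i - 1)) := by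
  induction k, hk using Nat.le_induction with
  | base =>
    have h0 : qp 0 = 2 := by unfold qp; norm_num
    have h1 : qp 1 = 3 := by unfold qp; norm_num
    simp [Finset.Icc_self, show Finset.Icc 1 2 = {1, 2} by decide]
    norm_num [h0, h1]
  | succ n hn ih =>
    have hfrac : ∀ m, (0:ℝ) < 1 - 1/qp m := by
      intro m
      have h2 : (2:ℝ) ≤ qp m := qp_ge_two m
      have : 1/qp m ≤ 1/2 := by apply one_div_le_one_div_of_le; norm_num; exact h2
      linarith
    have hP1 : (0:ℝ) ≤ ∏ i ∈ Finset.Icc 1 n, (1 - 1 / qp (i - 1)) ^ 2 :=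
      Finset.prod_nonneg fun i _ => sq_nonneg _
    rw [Finset.prod_Icc_succ_top (by omega : 2 ≤ n + 1),
        Finset.prod_Icc_succ_top (by omega : 1 ≤ n + 1)]
    have hnn : n + 1 - 1 = n := by omega
    rw [hnn]
    set P1 := ∏ i ∈ Finset.Icc 1 n, (1 - 1 / qp (i - 1)) ^ 2 with hP1def
    set P2 := ∏ i ∈ Finset.Icc 2 n, (1 - 2 / qp (i - 1)) with hP2def
    have hkey : (1 - 1/qp n) * (1 - 1/qp (n-1)) ≤ 1 - 2/qp n := by
      have := key (n-1)
      have hn1 : n - 1 + 1 = n := by omega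
      rwa [hn1] at this
    have hA : 0 ≤ 2 * P1 / (1 - 1/qp (n-1)) :=
      div_nonneg (by linarith) (hfrac (n-1)).le
    have h2qn : (0:ℝ) ≤ 1 - 2/qp n := by
      have h3 : (3:ℝ) ≤ qp n := by
        have := qp_succ 0
        have h0 : qp 0 = 2 := by unfold qp; norm_num
        have hmono : qp 1 ≤ qp n := by
          rcases Nat.lt_or_ge n 1 with h | h
          · omega
          · unfold qp
            exact_mod_cast Nat.nth_monotone
              (fun hf => absurd hf Nat.infinite_setOf_prime) h
        linarith
      have : 2/qp n ≤ 2/3 := by apply div_le_div_of_nonneg_left; norm_num; norm_num; exact h3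
      linarith
    calc 2 * (P1 * (1 - 1/qp n)^2) / (1 - 1/qp n)
        = (2 * P1 / (1 - 1/qp (n-1))) * ((1 - 1/qp n) * (1 - 1/qp (n-1))) := by
          have h1 : (1 - 1/qp n) ≠ 0 := (hfrac n).ne'
          have h2' : (1 - 1/qp (n-1)) ≠ 0 := (hfrac (n-1)).ne'
          field_simp
      _ ≤ (2 * P1 / (1 - 1/qp (n-1))) * (1 - 2/qp n) := by
          exact mul_le_mul_of_nonneg_left hkey hA
      _ ≤ P2 * (1 - 2/qp n) := mul_le_mul_of_nonneg_right ih h2qn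

/-- For all `k ≥ 2`, `∏_{i=2}^{k} (1 - 2/p_i) ≥ 2 · ∏_{i=1}^{k} (1 - 1/p_i)^2`,
where `p_i` denotes the `i`-th prime. -/
theorem stmt_14 (k : ℕ) (hk : 2 ≤ k) :
    ∏ i ∈ Finset.Icc 2 k, (1 - 2 / (Nat.nth Nat.Prime (i - 1) : ℝ)) ≥
      2 * ∏ i ∈ Finset.Icc 1 k, (1 - 1 / (Nat.nth Nat.Prime (i - 1) : ℝ)) ^ 2 := by
  have hs := strong k hk
  have hfrac : (0:ℝ) < 1 - 1/qp (k-1) := by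
    have h2 : (2:ℝ) ≤ qp (k-1) := qp_ge_two (k-1)
    have : 1/qp (k-1) ≤ 1/2 := by apply one_div_le_one_div_of_le; norm_num; exact h2
    linarith
  have hP1 : (0:ℝ) ≤ ∏ i ∈ Finset.Icc 1 k, (1 - 1 / qp (i - 1)) ^ 2 :=
    Finset.prod_nonneg fun i _ => sq_nonneg _
  have hle : 2 * (∏ i ∈ Finset.Icc 1 k, (1 - 1 / qp (i - 1)) ^ 2) ≤
      2 * (∏ i ∈ Finset.Icc 1 k, (1 - 1 / qp (i - 1)) ^ 2) / (1 - 1/qp (k-1)) := by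
    rw [le_div_iff₀ hfrac]
    have hq : (0:ℝ) < qp (k-1) := by linarith [qp_ge_two (k-1)]
    have h1 : 1 - 1/qp (k-1) ≤ 1 := by
      have : (0:ℝ) ≤ 1/qp (k-1) := by positivity
      linarith
    nlinarith [hP1, h1]
  unfold qp at *
  linarith
end

section
/- Let a ≥ 1 and b ≥ 1 be integers with p_a > b (p_a the a-th prime). Then the sum ∑_{j=1}^{n} ∏_{i=a}^{π(√j)} (1 - b/p_i) tends to infinity as n → ∞, where π is the prime counting function and an empty product equals 1. -/
open Filter

open Finset in
/-- Prime density tends to zero: totient ratio can be made small. -/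
lemma my_exists_totient_small (ε : ℝ) (hε : 0 < ε) :
    ∃ a : ℕ, 0 < a ∧ (Nat.totient a : ℝ) ≤ ε * a := by
  have hind : ∀ i : ℕ, 0 ≤ Set.indicator {p | Nat.Prime p} (fun n : ℕ => 1 / (n : ℝ)) i := by
    intro i
    apply Set.indicator_nonneg
    intro j _
    positivity
  have htend := (not_summable_iff_tendsto_nat_atTop_of_nonneg hind).mp
    not_summable_one_div_on_primes
  obtain ⟨N, hN⟩ := (htend.eventually_ge_atTop (-Real.log ε)).exists
  classical
  set s : Finset ℕ := (Finset.range N).filter Nat.Prime with hs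
  have hsum : ∑ p ∈ s, (p : ℝ)⁻¹ = ∑ i ∈ Finset.range N,
      Set.indicator {p | Nat.Prime p} (fun n : ℕ => 1 / (n : ℝ)) i := by
    rw [Finset.sum_indicator_eq_sum_filter]
    simp [hs, one_div]
  have hprimes : ∀ p ∈ s, Nat.Prime p := fun p hp => (Finset.mem_filter.mp hp).2
  refine ⟨∏ p ∈ s, p, Finset.prod_pos (fun p hp => (hprimes p hp).pos), ?_⟩
  have hpf : (∏ p ∈ s, p).primeFactors = s := Nat.primeFactors_prod hprimes
  have htot : ((∏ p ∈ s, p).totient : ℝ) = (∏ p ∈ s, p : ℕ) * ∏ p ∈ s, (1 - (p : ℝ)⁻¹) := by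
    have := Nat.totient_eq_mul_prod_factors (∏ p ∈ s, p)
    rw [hpf] at this
    have h2 := congrArg (fun q : ℚ => (q : ℝ)) this
    push_cast at h2 ⊢
    exact h2
  rw [htot, mul_comm (ε) _]
  apply mul_le_mul_of_nonneg_left _ (by positivity)
  calc ∏ p ∈ s, (1 - (p : ℝ)⁻¹) ≤ ∏ p ∈ s, Real.exp (-(p : ℝ)⁻¹) := by
        apply Finset.prod_le_prod
        · intro p hp
          have h2 : (2 : ℝ) ≤ p := by exact_mod_cast (hprimes p hp).two_le
          have : (p : ℝ)⁻¹ ≤ 1 := by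
            rw [inv_le_one_iff₀]; right; linarith
          linarith
        · intro p hp
          have := Real.add_one_le_exp (-(p : ℝ)⁻¹)
          linarith
    _ = Real.exp (-∑ p ∈ s, (p : ℝ)⁻¹) := by
        rw [← Real.exp_sum, Finset.sum_neg_distrib]
    _ ≤ ε := by
        rw [← Real.exp_log hε]
        apply Real.exp_le_exp.mpr
        rw [hsum]
        linarith

open Finset in
lemma my_pi_bound (ε : ℝ) (hε : 0 < ε) :
    ∃ C : ℝ, 0 ≤ C ∧ ∀ x : ℕ, (Nat.primeCounting' x : ℝ) ≤ ε * x + C := by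
  obtain ⟨a, ha, hfa⟩ := my_exists_totient_small ε hε
  refine ⟨(a : ℝ) + 2 + Nat.totient a, by positivity, fun x => ?_⟩
  by_cases hx : x ≤ a + 1
  · have h1 : Nat.primeCounting' x ≤ x := Nat.count_le _
    have : (Nat.primeCounting' x : ℝ) ≤ (a : ℝ) + 1 := by
      exact_mod_cast h1.trans hx
    have hx0 : (0:ℝ) ≤ ε * x := by positivity
    linarith
  · push_neg at hx
    set n := x - (a + 1) with hn
    have hxn : x = (a + 1) + n := by omega
    have key := Nat.primeCounting'_add_le ha.ne' (lt_add_one a) n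
    rw [← hxn] at key
    have h1 : (Nat.primeCounting' x : ℝ) ≤ (Nat.primeCounting' (a+1) : ℝ)
        + (Nat.totient a : ℝ) * ((n / a : ℕ) + 1) := by exact_mod_cast key
    have h2 : (Nat.primeCounting' (a+1) : ℝ) ≤ (a : ℝ) + 1 := by
      exact_mod_cast (Nat.count_le _ : Nat.primeCounting' (a+1) ≤ a + 1)
    have h3 : ((n / a : ℕ) : ℝ) ≤ (n : ℝ) / a := Nat.cast_div_le
    have h4 : (Nat.totient a : ℝ) * ((n / a : ℕ) : ℝ) ≤ ε * a * ((n:ℝ) / a) := by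
      apply mul_le_mul hfa h3 (by positivity) (by positivity)
    have ha0 : (0:ℝ) < a := by exact_mod_cast ha
    have h5 : ε * a * ((n:ℝ) / a) = ε * n := by field_simp
    have h6 : (n : ℝ) ≤ x := by exact_mod_cast (by omega : n ≤ x)
    have h7 : ε * n ≤ ε * x := by nlinarith
    have h8 : (Nat.totient a : ℝ) ≥ 0 := by positivity
    nlinarith [h4]

lemma my_nth_inv_bound (ε : ℝ) (hε : 0 < ε) :
    ∃ k₀ : ℕ, 1 ≤ k₀ ∧ ∀ k : ℕ, k₀ ≤ k →
      ((Nat.nth Nat.Prime k : ℝ))⁻¹ ≤ 2 * ε / k := by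
  obtain ⟨C, hC0, hC⟩ := my_pi_bound ε hε
  refine ⟨max 1 (Nat.ceil (2 * C)), le_max_left _ _, fun k hk => ?_⟩
  have hk1 : 1 ≤ k := le_trans (le_max_left _ _) hk
  have hk2C : 2 * C ≤ (k : ℝ) := by
    calc 2 * C ≤ (Nat.ceil (2*C) : ℝ) := Nat.le_ceil _
    _ ≤ k := by exact_mod_cast le_trans (le_max_right _ _) hk
  have hnth := hC (Nat.nth Nat.Prime k)
  rw [Nat.primeCounting'_nth_eq] at hnth
  -- (k:ℝ) ≤ ε * nth k + C
  have hp0 : (0:ℝ) < Nat.nth Nat.Prime k := by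
    have := Nat.add_two_le_nth_prime k
    exact_mod_cast by omega
  have hk0 : (0:ℝ) < k := by exact_mod_cast hk1
  have hge : (k : ℝ) / (2 * ε) ≤ (Nat.nth Nat.Prime k : ℝ) := by
    rw [div_le_iff₀ (by positivity)]
    nlinarith
  calc ((Nat.nth Nat.Prime k : ℝ))⁻¹ ≤ ((k : ℝ) / (2 * ε))⁻¹ := by
        apply inv_anti₀ (by positivity) hge
    _ = 2 * ε / k := by field_simp

open Finset in
lemma my_T_bound (ε : ℝ) (hε : 0 < ε) :
    ∃ D : ℝ, 0 ≤ D ∧ ∀ m : ℕ,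
      ∑ k ∈ Finset.range m, ((Nat.nth Nat.Prime k : ℝ))⁻¹ ≤ D + 2 * ε * Real.log m := by
  obtain ⟨k₀, hk₀1, hk₀⟩ := my_nth_inv_bound ε hε
  set T : ℕ → ℝ := fun m => ∑ k ∈ Finset.range m, ((Nat.nth Nat.Prime k : ℝ))⁻¹ with hT
  have hnonneg : ∀ k : ℕ, (0:ℝ) ≤ ((Nat.nth Nat.Prime k : ℝ))⁻¹ := by
    intro k
    positivity
  refine ⟨T k₀ + 2 * ε, by positivity, fun m => ?_⟩
  have hlog : 0 ≤ Real.log m := by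
    rcases Nat.eq_zero_or_pos m with h | h
    · simp [h]
    · apply Real.log_natCast_nonneg
  by_cases hm : m ≤ k₀
  · have : T m ≤ T k₀ := by
      apply Finset.sum_le_sum_of_subset_of_nonneg
      · exact Finset.range_subset_range.mpr hm
      · intro k _ _; exact hnonneg k
    nlinarith
  · push_neg at hm
    have hsplit : T m = T k₀ + ∑ k ∈ Finset.Ico k₀ m, ((Nat.nth Nat.Prime k : ℝ))⁻¹ := by
      rw [hT]
      simp only [Finset.range_eq_Ico]
      rw [Finset.sum_Ico_consecutive _ (Nat.zero_le _) hm.le]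
    have h2 : ∑ k ∈ Finset.Ico k₀ m, ((Nat.nth Nat.Prime k : ℝ))⁻¹
        ≤ ∑ k ∈ Finset.Ico k₀ m, 2 * ε * ((k:ℝ))⁻¹ := by
      apply Finset.sum_le_sum
      intro k hk
      rw [Finset.mem_Ico] at hk
      have := hk₀ k hk.1
      rw [div_eq_mul_inv] at this
      exact this
    have h3 : ∑ k ∈ Finset.Ico k₀ m, 2 * ε * ((k:ℝ))⁻¹
        = 2 * ε * ∑ k ∈ Finset.Ico k₀ m, ((k:ℝ))⁻¹ := by
      rw [Finset.mul_sum]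
    have h4 : ∑ k ∈ Finset.Ico k₀ m, ((k:ℝ))⁻¹ ≤ ∑ k ∈ Finset.Icc 1 m, ((k:ℝ))⁻¹ := by
      apply Finset.sum_le_sum_of_subset_of_nonneg
      · intro k hk
        rw [Finset.mem_Ico] at hk
        rw [Finset.mem_Icc]
        omega
      · intro k _ _; positivity
    have h5 : ∑ k ∈ Finset.Icc 1 m, ((k:ℝ))⁻¹ ≤ 1 + Real.log m := by
      have := harmonic_le_one_add_log m
      rw [harmonic_eq_sum_Icc] at this
      have h6 : ((∑ i ∈ Finset.Icc 1 m, ((i:ℚ))⁻¹ : ℚ) : ℝ) = ∑ k ∈ Finset.Icc 1 m, ((k:ℝ))⁻¹ := by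
        push_cast
        rfl
      calc ∑ k ∈ Finset.Icc 1 m, ((k:ℝ))⁻¹ = ((∑ i ∈ Finset.Icc 1 m, ((i:ℚ))⁻¹ : ℚ) : ℝ) := h6.symm
        _ ≤ 1 + Real.log m := by exact_mod_cast this
    nlinarith

open Finset in
-- per-factor bound: for b ≥ 1, p ≥ b + 1, exp(-(b(b+1)/p)) ≤ 1 - b/p
lemma my_factor_bound (b : ℕ) (hb : 1 ≤ b) (p : ℝ) (hp : (b:ℝ) + 1 ≤ p) :
    Real.exp (-((b:ℝ) * (b+1) / p)) ≤ 1 - (b:ℝ) / p := by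
  have hb1 : (1:ℝ) ≤ b := by exact_mod_cast hb
  have hp0 : (0:ℝ) < p := by linarith
  have hpos : (0:ℝ) < 1 - (b:ℝ)/p := by
    rw [sub_pos, div_lt_one hp0]; linarith
  rw [← Real.exp_log hpos, Real.exp_le_exp]
  -- suffices : -(b(b+1)/p) ≤ log (1 - b/p), i.e. -log(1-b/p) ≤ b(b+1)/p
  have hlog : Real.log ((1 - (b:ℝ)/p)⁻¹) ≤ (1 - (b:ℝ)/p)⁻¹ - 1 :=
    Real.log_le_sub_one_of_pos (by positivity)
  rw [Real.log_inv] at hlog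
  have hinv : (1 - (b:ℝ)/p)⁻¹ - 1 ≤ (b:ℝ) * (b+1) / p := by
    have h1 : (1 - (b:ℝ)/p) = (p - b)/p := by field_simp
    rw [h1]
    have hpb : (0:ℝ) < p - b := by linarith
    rw [inv_div, div_sub_one (by linarith), div_le_div_iff₀ hpb hp0]
    nlinarith [mul_nonneg (mul_nonneg (by linarith : (0:ℝ) ≤ (b:ℝ)) (by linarith : (0:ℝ) ≤ (b:ℝ))) (by linarith : (0:ℝ) ≤ p - (b:ℝ) - 1)]
  linarith

open Finset in
lemma my_prod_bound (a b m : ℕ) (ha : 1 ≤ a) (hb : 1 ≤ b)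
    (hba : b < Nat.nth Nat.Prime (a - 1)) :
    Real.exp (-((b:ℝ) * (b+1) * ∑ k ∈ Finset.range m, ((Nat.nth Nat.Prime k : ℝ))⁻¹))
      ≤ ∏ i ∈ Finset.Icc a m, (1 - (b : ℝ) / (Nat.nth Nat.Prime (i - 1) : ℝ)) := by
  have hple : ∀ i ∈ Finset.Icc a m, (b:ℝ) + 1 ≤ (Nat.nth Nat.Prime (i-1) : ℝ) := by
    intro i hi
    rw [Finset.mem_Icc] at hi
    have h1 : Nat.nth Nat.Prime (a-1) ≤ Nat.nth Nat.Prime (i-1) :=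
      Nat.nth_monotone Nat.infinite_setOf_prime (by omega)
    have : b + 1 ≤ Nat.nth Nat.Prime (i-1) := by omega
    exact_mod_cast this
  calc Real.exp (-((b:ℝ) * (b+1) * ∑ k ∈ Finset.range m, ((Nat.nth Nat.Prime k : ℝ))⁻¹))
      ≤ Real.exp (-((b:ℝ) * (b+1) * ∑ i ∈ Finset.Icc a m, ((Nat.nth Nat.Prime (i-1) : ℝ))⁻¹)) := by
        rw [Real.exp_le_exp, neg_le_neg_iff]
        apply mul_le_mul_of_nonneg_left _ (by positivity)
        calc ∑ i ∈ Finset.Icc a m, ((Nat.nth Nat.Prime (i-1) : ℝ))⁻¹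
            ≤ ∑ i ∈ Finset.Icc 1 m, ((Nat.nth Nat.Prime (i-1) : ℝ))⁻¹ := by
              apply Finset.sum_le_sum_of_subset_of_nonneg
              · intro i hi
                rw [Finset.mem_Icc] at hi ⊢
                omega
              · intro i _ _; positivity
          _ = ∑ k ∈ Finset.range m, ((Nat.nth Nat.Prime k : ℝ))⁻¹ := by
              rw [← Finset.Ico_add_one_right_eq_Icc, Finset.sum_Ico_eq_sum_range]
              simp
    _ = ∏ i ∈ Finset.Icc a m, Real.exp (-((b:ℝ) * (b+1) / (Nat.nth Nat.Prime (i-1) : ℝ))) := by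
        rw [← Real.exp_sum]
        congr 1
        rw [Finset.mul_sum, ← Finset.sum_neg_distrib]
        apply Finset.sum_congr rfl
        intro i _
        rw [div_eq_mul_inv]
    _ ≤ ∏ i ∈ Finset.Icc a m, (1 - (b : ℝ) / (Nat.nth Nat.Prime (i - 1) : ℝ)) := by
        apply Finset.prod_le_prod
        · intro i _; positivity
        · intro i hi
          exact my_factor_bound b hb _ (hple i hi)

/-- For integers `a, b ≥ 1` with `p_a > b`, the sum
`∑_{j=1}^{n} ∏_{i=a}^{π(√j)} (1 - b/p_i)` tends to infinity as `n → ∞`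
(`p_i` the `i`-th prime, `π` the prime counting function; empty products are `1`). -/
theorem stmt_15 (a b : ℕ) (ha : 1 ≤ a) (hb : 1 ≤ b)
    (hba : b < Nat.nth Nat.Prime (a - 1)) :
    Tendsto (fun n : ℕ =>
        ∑ j ∈ Finset.Icc 1 n,
          ∏ i ∈ Finset.Icc a (Nat.primeCounting (Nat.sqrt j)),
            (1 - (b : ℝ) / (Nat.nth Nat.Prime (i - 1) : ℝ)))
      atTop atTop := by
  classical
  set term : ℕ → ℝ := fun j =>
    ∏ i ∈ Finset.Icc a (Nat.primeCounting (Nat.sqrt j)),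
      (1 - (b : ℝ) / (Nat.nth Nat.Prime (i - 1) : ℝ)) with hterm_def
  set K : ℝ := (b:ℝ) * ((b:ℝ)+1) with hK
  have hK0 : 0 < K := by positivity
  set ε : ℝ := 1 / (8 * (K + 1)) with hε
  have hεpos : 0 < ε := by positivity
  obtain ⟨D, hD0, hD⟩ := my_T_bound ε hεpos
  set R : ℝ := 4 * K * D with hR
  set j₀ : ℕ := max 2 (Nat.ceil (Real.exp R) + 1) with hj₀
  -- lower bound on terms via my_prod_bound
  have hterm_lb : ∀ j : ℕ,
      Real.exp (-(K * ∑ k ∈ Finset.range (Nat.primeCounting (Nat.sqrt j)),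
        ((Nat.nth Nat.Prime k : ℝ))⁻¹)) ≤ term j := fun j =>
    my_prod_bound a b _ ha hb hba
  have hterm_nonneg : ∀ j : ℕ, 0 ≤ term j := fun j =>
    le_trans (Real.exp_pos _).le (hterm_lb j)
  -- key estimate for large j
  have hkey : ∀ j : ℕ, j₀ ≤ j → ((j:ℝ)) ^ (-(2⁻¹ : ℝ)) ≤ term j := by
    intro j hj
    have hj2 : 2 ≤ j := le_trans (le_max_left _ _) hj
    have hjR : Real.exp R ≤ (j : ℝ) := by
      have h1 : Nat.ceil (Real.exp R) + 1 ≤ j := le_trans (le_max_right _ _) hj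
      calc Real.exp R ≤ (Nat.ceil (Real.exp R) : ℝ) := Nat.le_ceil _
        _ ≤ (j : ℝ) := by exact_mod_cast by omega
    have hjpos : (0:ℝ) < j := by positivity
    have hlogR : R ≤ Real.log j := (Real.le_log_iff_exp_le hjpos).mpr hjR
    set m : ℕ := Nat.primeCounting (Nat.sqrt j) with hm
    have hmj : m ≤ j := by
      have h1 : m ≤ Nat.sqrt j + 1 := Nat.count_le _
      have h2 : Nat.sqrt j < j := Nat.sqrt_lt_self (by omega)
      omega
    have hlogm : Real.log m ≤ Real.log j := by
      rcases Nat.eq_zero_or_pos m with h | h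
      · simp only [h, Nat.cast_zero, Real.log_zero]
        exact Real.log_natCast_nonneg j
      · exact Real.log_le_log (by exact_mod_cast h) (by exact_mod_cast hmj)
    have hT := hD m
    have hlogj0 : 0 ≤ Real.log j := Real.log_natCast_nonneg j
    -- K * T m ≤ K*D + 2εK * log j ≤ (1/4) log j + (1/4) log j
    have h2eK : 2 * ε * K ≤ 1/4 := by
      have hprod : ε * (8 * (K + 1)) = 1 := by
        rw [hε]; field_simp
      nlinarith
    have hKD : K * D ≤ (1/4) * Real.log j := by
      have : R ≤ Real.log j := hlogR
      rw [hR] at this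
      linarith
    have hchain : K * (∑ k ∈ Finset.range m, ((Nat.nth Nat.Prime k : ℝ))⁻¹)
        ≤ (1/2) * Real.log j := by
      have h1 : ∑ k ∈ Finset.range m, ((Nat.nth Nat.Prime k : ℝ))⁻¹
          ≤ D + 2 * ε * Real.log j := by
        have h2 : 2 * ε * Real.log m ≤ 2 * ε * Real.log j := by nlinarith
        linarith
      have h3 : K * (D + 2 * ε * Real.log j) ≤ K * D + (1/4) * Real.log j := by
        have h4 : K * (2 * ε * Real.log j) ≤ (1/4) * Real.log j := by nlinarith
        nlinarith
      nlinarith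
    calc ((j:ℝ)) ^ (-(2⁻¹ : ℝ)) = Real.exp (Real.log j * (-(2⁻¹ : ℝ))) :=
          Real.rpow_def_of_pos hjpos _
      _ ≤ Real.exp (-(K * ∑ k ∈ Finset.range m, ((Nat.nth Nat.Prime k : ℝ))⁻¹)) := by
          rw [Real.exp_le_exp]
          linarith
      _ ≤ term j := hterm_lb j
  -- divergent minorant
  set g : ℕ → ℝ := fun j => if j₀ ≤ j then ((j:ℝ)) ^ (-(2⁻¹ : ℝ)) else 0 with hg
  have hgnonneg : ∀ j, 0 ≤ g j := by
    intro j
    rw [hg]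
    dsimp only
    split
    · positivity
    · exact le_refl 0
  have hgnotsum : ¬ Summable g := by
    intro hsum
    have h1 : Summable (fun n : ℕ => ((n + j₀ : ℕ) : ℝ) ^ (-(2⁻¹ : ℝ))) := by
      have h2 := (summable_nat_add_iff j₀).mpr hsum
      apply h2.congr
      intro n
      rw [hg]
      simp only
      rw [if_pos (by omega)]
    have h3 : Summable (fun n : ℕ => ((n : ℕ) : ℝ) ^ (-(2⁻¹ : ℝ))) :=
      (summable_nat_add_iff j₀).mp h1
    have h4 := Real.summable_nat_rpow.mp h3
    norm_num at h4
  have hgtend := (not_summable_iff_tendsto_nat_atTop_of_nonneg hgnonneg).mp hgnotsum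
  -- compare
  have hcompare : ∀ n : ℕ, ∑ i ∈ Finset.range (n+1), g i ≤ ∑ j ∈ Finset.Icc 1 n, term j := by
    intro n
    have hg0 : g 0 = 0 := by
      rw [hg]
      simp only
      rw [if_neg (by omega)]
    have h1 : ∑ i ∈ Finset.range (n+1), g i = ∑ j ∈ Finset.Icc 1 n, g j := by
      rw [Finset.sum_range_succ']
      rw [← Finset.Ico_add_one_right_eq_Icc, Finset.sum_Ico_eq_sum_range]
      simp [hg0, add_comm]
    rw [h1]
    apply Finset.sum_le_sum
    intro j hj
    rw [hg]
    dsimp only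
    split
    · next h => exact hkey j h
    · exact hterm_nonneg j
  apply tendsto_atTop_mono hcompare
  exact hgtend.comp (tendsto_add_atTop_nat 1)
end
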